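/- In the polynomial ring ℚ[K₁,K₂,K₃], the ideal quotient ⟨K₁², K₂³, K₃³⟩ : ((K₁+3K₂)(K₁+3K₃)) — i.e. the ideal of all f with f·(K₁+3K₂)(K₁+3K₃) ∈ ⟨K₁², K₂³, K₃³⟩ — is equal to the ideal ⟨K₂K₃² − K₂²K₃, K₁K₂ − 3K₂², K₁K₃ − 3K₃², K₁², K₂³, K₃³⟩. -/

import Mathlib

open MvPolynomial Finsupp

private noncomputable def JJ : Ideal (MvPolynomial (Fin 3) ℚ) :=
  Ideal.span {X 1 * X 2 ^ 2 - X 1 ^ 2 * X 2, X 0 * X 1 - 3 * X 1 ^ 2,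
    X 0 * X 2 - 3 * X 2 ^ 2, X 0 ^ 2, X 1 ^ 3, X 2 ^ 3}

private noncomputable def II : Ideal (MvPolynomial (Fin 3) ℚ) :=
  Ideal.span {X 0 ^ 2, X 1 ^ 3, X 2 ^ 3}

private noncomputable def pp : MvPolynomial (Fin 3) ℚ := (X 0 + 3 * X 1) * (X 0 + 3 * X 2)

private lemma hg1 : (X 1 * X 2 ^ 2 - X 1 ^ 2 * X 2 : MvPolynomial (Fin 3) ℚ) ∈ JJ :=
  Ideal.subset_span (by simp)
private lemma hg2 : (X 0 * X 1 - 3 * X 1 ^ 2 : MvPolynomial (Fin 3) ℚ) ∈ JJ :=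
  Ideal.subset_span (by simp)
private lemma hg3 : (X 0 * X 2 - 3 * X 2 ^ 2 : MvPolynomial (Fin 3) ℚ) ∈ JJ :=
  Ideal.subset_span (by simp)
private lemma hg4 : (X 0 ^ 2 : MvPolynomial (Fin 3) ℚ) ∈ JJ := Ideal.subset_span (by simp)
private lemma hg5 : (X 1 ^ 3 : MvPolynomial (Fin 3) ℚ) ∈ JJ := Ideal.subset_span (by simp)
private lemma hg6 : (X 2 ^ 3 : MvPolynomial (Fin 3) ℚ) ∈ JJ := Ideal.subset_span (by simp)

private lemma mem_II_of (q f1 f2 f3 : MvPolynomial (Fin 3) ℚ)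
    (hq : q = f1 * X 0 ^ 2 + f2 * X 1 ^ 3 + f3 * X 2 ^ 3) : q ∈ II := by
  rw [hq]
  exact add_mem (add_mem
    (Ideal.mul_mem_left _ _ (Ideal.subset_span (by simp)))
    (Ideal.mul_mem_left _ _ (Ideal.subset_span (by simp))))
    (Ideal.mul_mem_left _ _ (Ideal.subset_span (by simp)))

private lemma J_le_colon : JJ ≤ II.colon (Ideal.span {pp}) := by
  rw [JJ, Ideal.span_le]
  intro x hx
  simp only [Set.mem_insert_iff, Set.mem_singleton_iff] at hx
  rw [SetLike.mem_coe, Ideal.mem_colon_span_singleton]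
  rcases hx with rfl | rfl | rfl | rfl | rfl | rfl
  · exact mem_II_of _ (X 1 * X 2 * (X 2 - X 1)) (-3 * X 2 * (X 0 + 3 * X 2))
      (3 * X 1 * (X 0 + 3 * X 1)) (by rw [pp]; ring)
  · exact mem_II_of _ (X 1 * (X 0 + 3 * X 2)) (-9 * (X 0 + 3 * X 2)) 0 (by rw [pp]; ring)
  · exact mem_II_of _ (X 2 * (X 0 + 3 * X 1)) 0 (-9 * (X 0 + 3 * X 1)) (by rw [pp]; ring)
  · exact mem_II_of _ pp 0 0 (by ring)
  · exact mem_II_of _ 0 pp 0 (by ring)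
  · exact mem_II_of _ 0 0 pp (by ring)

private lemma decomp (f : MvPolynomial (Fin 3) ℚ) :
    ∃ a b c d e g h i : ℚ, ∃ j ∈ JJ,
      f = j + (C a + C b * X 0 + C c * X 1 + C d * X 2 + C e * X 1 ^ 2 + C g * X 2 ^ 2 +
        C h * (X 1 * X 2) + C i * (X 1 ^ 2 * X 2)) := by
  induction f using MvPolynomial.induction_on with
  | C r => exact ⟨r, 0, 0, 0, 0, 0, 0, 0, 0, JJ.zero_mem, by simp⟩
  | add q1 q2 h1 h2 =>
    obtain ⟨a1, b1, c1, d1, e1, g1, h1', i1, j1, hj1, rfl⟩ := h1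
    obtain ⟨a2, b2, c2, d2, e2, g2, h2', i2, j2, hj2, rfl⟩ := h2
    exact ⟨a1 + a2, b1 + b2, c1 + c2, d1 + d2, e1 + e2, g1 + g2, h1' + h2', i1 + i2,
      j1 + j2, add_mem hj1 hj2, by simp only [map_add]; ring⟩
  | mul_X q n hq =>
    obtain ⟨a, b, c, d, e, g, h, i, j, hj, rfl⟩ := hq
    fin_cases n <;> simp only [Fin.zero_eta, Fin.mk_one, Fin.reduceFinMk]
    · refine ⟨0, a, 0, 0, 3 * c, 3 * d, 0, 3 * h,
        j * X 0 + C b * X 0 ^ 2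
          + (C c + C e * X 1 + C h * X 2 + C i * (X 1 * X 2)) * (X 0 * X 1 - 3 * X 1 ^ 2)
          + (C d + C g * X 2) * (X 0 * X 2 - 3 * X 2 ^ 2)
          + (C (3 * e) + C (3 * i) * X 2) * X 1 ^ 3 + C (3 * g) * X 2 ^ 3, ?_, ?_⟩
      · exact add_mem (add_mem (add_mem (add_mem (add_mem (Ideal.mul_mem_right _ _ hj)
          (Ideal.mul_mem_left _ _ hg4)) (Ideal.mul_mem_left _ _ hg2))
          (Ideal.mul_mem_left _ _ hg3)) (Ideal.mul_mem_left _ _ hg5))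
          (Ideal.mul_mem_left _ _ hg6)
      · simp only [map_mul, map_ofNat, map_zero]; ring
    · refine ⟨0, 0, a, 0, c + 3 * b, 0, d, h + g,
        j * X 1 + C b * (X 0 * X 1 - 3 * X 1 ^ 2) + C e * X 1 ^ 3
          + C g * (X 1 * X 2 ^ 2 - X 1 ^ 2 * X 2) + (C i * X 2) * X 1 ^ 3, ?_, ?_⟩
      · exact add_mem (add_mem (add_mem (add_mem (Ideal.mul_mem_right _ _ hj)
          (Ideal.mul_mem_left _ _ hg2)) (Ideal.mul_mem_left _ _ hg5))
          (Ideal.mul_mem_left _ _ hg1)) (Ideal.mul_mem_left _ _ hg5)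
      · simp only [map_mul, map_ofNat, map_add, map_zero]; ring
    · refine ⟨0, 0, 0, a, 0, d + 3 * b, c, e + h,
        j * X 2 + C b * (X 0 * X 2 - 3 * X 2 ^ 2) + C g * X 2 ^ 3
          + C h * (X 1 * X 2 ^ 2 - X 1 ^ 2 * X 2)
          + C i * (X 1 * (X 1 * X 2 ^ 2 - X 1 ^ 2 * X 2) + X 1 ^ 3 * X 2), ?_, ?_⟩
      · exact add_mem (add_mem (add_mem (add_mem (Ideal.mul_mem_right _ _ hj)
          (Ideal.mul_mem_left _ _ hg3)) (Ideal.mul_mem_left _ _ hg6))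
          (Ideal.mul_mem_left _ _ hg1))
          (Ideal.mul_mem_left _ _ (add_mem (Ideal.mul_mem_left _ _ hg1)
            (Ideal.mul_mem_right _ _ hg5)))
      · simp only [map_mul, map_ofNat, map_add, map_zero]; ring

private lemma II_eq_monomial_span :
    II = Ideal.span ((fun s => (monomial s (1 : ℚ))) ''
      ({single 0 2, single 1 3, single 2 3} : Set (Fin 3 →₀ ℕ))) := by
  rw [II]
  congr 1
  simp [Set.image_insert_eq, X_pow_eq_monomial]

set_option maxHeartbeats 2000000 in
private lemma colon_le_J : II.colon (Ideal.span {pp}) ≤ JJ := by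
  intro f hf
  obtain ⟨a, b, c, d, e, g, h, i, j, hj, hfeq⟩ := decomp f
  have hfp : f * pp ∈ II := Ideal.mem_colon_span_singleton.1 hf
  have hjp : j * pp ∈ II := Ideal.mem_colon_span_singleton.1 (J_le_colon hj)
  set r : MvPolynomial (Fin 3) ℚ :=
    C a + C b * X 0 + C c * X 1 + C d * X 2 + C e * X 1 ^ 2 + C g * X 2 ^ 2 +
      C h * (X 1 * X 2) + C i * (X 1 ^ 2 * X 2) with hr
  have hrp : r * pp ∈ II := by
    have : r * pp = f * pp - j * pp := by rw [hfeq]; ring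
    rw [this]; exact sub_mem hfp hjp
  rw [II_eq_monomial_span] at hrp
  rw [mem_ideal_span_monomial_image] at hrp
  have key : ∀ m : Fin 3 →₀ ℕ, m 0 ≤ 1 → m 1 ≤ 2 → m 2 ≤ 2 → coeff m (r * pp) = 0 := by
    intro m h0 h1 h2
    by_contra hne
    obtain ⟨si, hsi, hle⟩ := hrp m (MvPolynomial.mem_support_iff.2 hne)
    simp only [Set.mem_insert_iff, Set.mem_singleton_iff] at hsi
    rw [Finsupp.le_def] at hle
    rcases hsi with rfl | rfl | rfl
    · have := hle 0; simp [single_apply] at this; omega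
    · have := hle 1; simp [single_apply] at this; omega
    · have := hle 2; simp [single_apply] at this; omega
  have hexp : r * pp =
      C a * (X 0 * X 0) + C (3*a) * (X 0 * X 1) + C (3*a) * (X 0 * X 2) + C (9*a) * (X 1 * X 2)
    + C b * (X 0 * X 0 * X 0) + C (3*b) * (X 0 * X 0 * X 1) + C (3*b) * (X 0 * X 0 * X 2)
      + C (9*b) * (X 0 * X 1 * X 2)
    + C c * (X 0 * X 0 * X 1) + C (3*c) * (X 0 * X 1 * X 1) + C (3*c) * (X 0 * X 1 * X 2)
      + C (9*c) * (X 1 * X 1 * X 2)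
    + C d * (X 0 * X 0 * X 2) + C (3*d) * (X 0 * X 1 * X 2) + C (3*d) * (X 0 * X 2 * X 2)
      + C (9*d) * (X 1 * X 2 * X 2)
    + C e * (X 0 * X 0 * X 1 * X 1) + C (3*e) * (X 0 * X 1 * X 1 * X 1)
      + C (3*e) * (X 0 * X 1 * X 1 * X 2) + C (9*e) * (X 1 * X 1 * X 1 * X 2)
    + C g * (X 0 * X 0 * X 2 * X 2) + C (3*g) * (X 0 * X 1 * X 2 * X 2)
      + C (3*g) * (X 0 * X 2 * X 2 * X 2) + C (9*g) * (X 1 * X 2 * X 2 * X 2)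
    + C h * (X 0 * X 0 * X 1 * X 2) + C (3*h) * (X 0 * X 1 * X 1 * X 2)
      + C (3*h) * (X 0 * X 1 * X 2 * X 2) + C (9*h) * (X 1 * X 1 * X 2 * X 2)
    + C i * (X 0 * X 0 * X 1 * X 1 * X 2) + C (3*i) * (X 0 * X 1 * X 1 * X 1 * X 2)
      + C (3*i) * (X 0 * X 1 * X 1 * X 2 * X 2) + C (9*i) * (X 1 * X 1 * X 1 * X 2 * X 2) := by
    rw [hr, pp]; simp only [map_mul, map_ofNat]; ring
  have E1 := key (single 1 1 + single 2 1) (by simp) (by simp [single_apply]) (by simp [single_apply])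
  have E2 := key (single 0 1 + single 1 2) (by simp [single_apply]) (by simp [single_apply]) (by simp [single_apply])
  have E3 := key (single 0 1 + single 2 2) (by simp [single_apply]) (by simp [single_apply]) (by simp [single_apply])
  have E4 := key (single 0 1 + single 1 1 + single 2 1) (by simp [single_apply]) (by simp [single_apply]) (by simp [single_apply])
  have E5 := key (single 1 2 + single 2 2) (by simp [single_apply]) (by simp [single_apply]) (by simp [single_apply])
  have E6 := key (single 0 1 + single 1 2 + single 2 1) (by simp [single_apply]) (by simp [single_apply]) (by simp [single_apply])
  have E7 := key (single 0 1 + single 1 1 + single 2 2) (by simp [single_apply]) (by simp [single_apply]) (by simp [single_apply])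
  have E8 := key (single 0 1 + single 1 2 + single 2 2) (by simp [single_apply]) (by simp [single_apply]) (by simp [single_apply])
  rw [hexp] at E1 E2 E3 E4 E5 E6 E7 E8
  simp only [coeff_add, coeff_C_mul, X, X_pow_eq_monomial, monomial_mul, coeff_monomial,
    Finsupp.ext_iff, Fin.forall_fin_succ, Finsupp.single_apply, Finsupp.add_apply] at E1 E2 E3 E4 E5 E6 E7 E8
  simp (config := { decide := true }) at E1 E2 E3 E4 E5 E6 E7 E8
  have ha : a = 0 := by linarith
  have hc : c = 0 := by linarith
  have hd : d = 0 := by linarith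
  have hb : b = 0 := by linarith
  have hh : h = 0 := by linarith
  have he : e = 0 := by linarith
  have hg : g = 0 := by linarith
  have hi : i = 0 := by linarith
  rw [hfeq, hr] at *
  rw [ha, hb, hc, hd, he, hg, hh, hi]
  simpa using hj

open MvPolynomial

/-- **The toric intersection ideal of the Calabi–Yau complete intersection `X̃`.**
In `ℚ[K₁,K₂,K₃]` (with `K₁ = X 0`, `K₂ = X 1`, `K₃ = X 2`), the ideal quotient of the
Stanley–Reisner ideal `⟨K₁², K₂³, K₃³⟩` of `ℙ²×ℙ¹×ℙ²` by the product
`(K₁+3K₂)(K₁+3K₃)` of the classes of the two hypersurfaces cutting out `X̃` is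
`⟨K₂K₃² − K₂²K₃, K₁K₂ − 3K₂², K₁K₃ − 3K₃², K₁², K₂³, K₃³⟩`. -/
theorem ideal_quotient_Xtilde :
    (Ideal.span {X 0 ^ 2, X 1 ^ 3, X 2 ^ 3} :
        Ideal (MvPolynomial (Fin 3) ℚ)).colon
      ((Ideal.span {(X 0 + 3 * X 1) * (X 0 + 3 * X 2)} :
        Ideal (MvPolynomial (Fin 3) ℚ)) : Set (MvPolynomial (Fin 3) ℚ)) =
    Ideal.span {X 1 * X 2 ^ 2 - X 1 ^ 2 * X 2,
      X 0 * X 1 - 3 * X 1 ^ 2,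
      X 0 * X 2 - 3 * X 2 ^ 2,
      X 0 ^ 2, X 1 ^ 3, X 2 ^ 3} := by
  exact le_antisymm colon_le_J J_le_colon
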